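/- arXiv:1706.05352 — 3 statements merged into one kernel-verified Lean document; each statement's English description precedes it below -/
import Mathlib

section
/- Let f and g be polynomials over a field, with deg f = d ≥ 2, and suppose g ∘ f^k = f^k ∘ g for some k ≥ 1. Let ψ : K → ℝ be a function satisfying ψ ∘ f = d·ψ and ψ ∘ g = deg(g)·ψ + O(1) (i.e., there is a constant C with |ψ(g(x)) − deg(g)ψ(x)| ≤ C for all x). Then ψ ∘ g = deg(g)·ψ exactly, i.e., ψ(g(x)) = deg(g)·ψ(x) for all x ∈ K. -/
open Polynomial

/-- The `k`-fold iterate `f^k` of a polynomial under composition (`f^0 = X`). -/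
noncomputable def polyIter {K : Type*} [CommRing K] (f : Polynomial K) : ℕ → Polynomial K
  | 0 => Polynomial.X
  | n + 1 => f.comp (polyIter f n)

lemma psi_polyIter {K : Type*} [CommRing K] (F : Polynomial K) (ψ : K → ℝ) (D : ℝ)
    (h : ∀ x, ψ (F.eval x) = D * ψ x) :
    ∀ n x, ψ ((polyIter F n).eval x) = D ^ n * ψ x := by
  intro n
  induction n with
  | zero => simp [polyIter]
  | succ n ih =>
    intro x
    simp only [polyIter, Polynomial.eval_comp, h, ih, pow_succ]
    ring

lemma comm_polyIter {K : Type*} [CommRing K] (F g : Polynomial K)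
    (h : g.comp F = F.comp g) :
    ∀ n, g.comp (polyIter F n) = (polyIter F n).comp g := by
  intro n
  induction n with
  | zero => simp [polyIter]
  | succ n ih =>
    simp only [polyIter]
    calc g.comp (F.comp (polyIter F n)) = (g.comp F).comp (polyIter F n) := by
          rw [Polynomial.comp_assoc]
      _ = (F.comp g).comp (polyIter F n) := by rw [h]
      _ = F.comp (g.comp (polyIter F n)) := by rw [Polynomial.comp_assoc]
      _ = F.comp ((polyIter F n).comp g) := by rw [ih]
      _ = (F.comp (polyIter F n)).comp g := by rw [Polynomial.comp_assoc]

/-- if `g ∘ f^k = f^k ∘ g` and `ψ ∘ f = d·ψ`, `ψ ∘ g = deg(g)·ψ + O(1)`,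
then `ψ ∘ g = deg(g)·ψ` exactly. -/
theorem psi_comp_commuting_exact {K : Type*} [Field K] (f g : Polynomial K) (d : ℕ)
    (hdeg : f.natDegree = d) (hd : 2 ≤ d) (k : ℕ) (hk : 1 ≤ k)
    (hcomm : g.comp (polyIter f k) = (polyIter f k).comp g)
    (ψ : K → ℝ) (hψf : ∀ x : K, ψ (f.eval x) = (d : ℝ) * ψ x)
    (C : ℝ) (hC : ∀ x : K, |ψ (g.eval x) - (g.natDegree : ℝ) * ψ x| ≤ C) :
    ∀ x : K, ψ (g.eval x) = (g.natDegree : ℝ) * ψ x := by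
  intro x
  set F := polyIter f k with hF
  have hψF : ∀ x, ψ (F.eval x) = ((d : ℝ) ^ k) * ψ x :=
    psi_polyIter f ψ (d : ℝ) hψf k
  set D : ℝ := (d : ℝ) ^ k with hD
  have hD1 : 1 < D := by
    apply one_lt_pow₀
    · exact_mod_cast Nat.lt_of_lt_of_le one_lt_two hd
    · omega
  have hψFn : ∀ n x, ψ ((polyIter F n).eval x) = D ^ n * ψ x :=
    psi_polyIter F ψ D hψF
  have hcomm' := comm_polyIter F g hcomm
  set a : ℝ := ψ (g.eval x) - (g.natDegree : ℝ) * ψ x with ha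
  have key : ∀ n : ℕ, |a| * D ^ n ≤ C := by
    intro n
    have h1 := hC ((polyIter F n).eval x)
    have h2 : g.eval ((polyIter F n).eval x) = (polyIter F n).eval (g.eval x) := by
      have := congrArg (Polynomial.eval x) (hcomm' n)
      simpa [Polynomial.eval_comp] using this
    rw [h2, hψFn, hψFn] at h1
    calc |a| * D ^ n = |a * D ^ n| := by
          rw [abs_mul, abs_of_nonneg (by positivity : (0:ℝ) ≤ D ^ n)]
      _ = |D ^ n * ψ (g.eval x) - (g.natDegree : ℝ) * (D ^ n * ψ x)| := by
          rw [ha]; ring_nf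
      _ ≤ C := h1
  by_contra hne
  have habs : 0 < |a| := abs_pos.mpr (sub_ne_zero.mpr hne)
  obtain ⟨n, hn⟩ := pow_unbounded_of_one_lt (C / |a|) hD1
  have := key n
  have : D ^ n ≤ C / |a| := (le_div_iff₀ habs).mpr (by linarith [key n])
  linarith
end

section
/- Let K be a number field with standard normalized absolute values, and let c₁, …, c_{d−1} ∈ K with d ≥ 3 satisfy c₁c₂⋯c_{d−1} = (−1)^{d−1}λ for some λ ∈ K^×. For each place v write n_v = [K_v:ℚ_v]/[K:ℚ] and ‖c‖_v = max_i |c_i|_v. Let S = { v : 5 log|c₁|_v < log‖c‖_v }. Then ∑_{v∈S} n_v log⁺‖c‖_v ≥ (1/(5d−9)) h(c) − ((5d−4)/(5d−9)) h(λ), where h(c) = ∑_{v} n_v log⁺‖c‖_v is the standard Weil height of the point (c₁,…,c_{d−1}) ∈ 𝔸^{d−1}(K) and h(λ) is the Weil height of λ. -/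
open Real

set_option maxHeartbeats 1000000 in
/-- for a number field `K` (modelled by a family of normalized absolute values
`av v` with weights `nv v` satisfying the product formula), if `c₁⋯c_{d−1} = (−1)^{d−1}λ`
with `λ ≠ 0`, and `S = {v : 5 log|c₁|_v < log‖c‖_v}`, then
`∑_{v∈S} n_v log⁺‖c‖_v ≥ (1/(5d−9)) h(c) − ((5d−4)/(5d−9)) h(λ)`. -/
theorem places_in_S_carry_height {K : Type*} [Field K] {V : Type*}
    (av : V → AbsoluteValue K ℝ) (nv : V → ℝ) (hnv : ∀ v, 0 < nv v)
    (hfin : ∀ x : K, x ≠ 0 → {v | av v x ≠ 1}.Finite)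
    (hprod : ∀ x : K, x ≠ 0 → ∑ᶠ v, nv v * Real.log (av v x) = 0)
    (d : ℕ) (hd : 3 ≤ d) (c : Fin (d - 1) → K) (lam : K) (hlam : lam ≠ 0)
    (hrel : ∏ i, c i = (-1) ^ (d - 1) * lam)
    (cnorm : V → ℝ)
    (hcnorm : ∀ v, cnorm v = Finset.univ.sup'
      (Finset.univ_nonempty_iff.mpr ⟨(⟨0, by omega⟩ : Fin (d - 1))⟩) (fun i => av v (c i)))
    (S : Set V) (hS : S = {v | 5 * Real.log (av v (c ⟨0, by omega⟩)) < Real.log (cnorm v)}) :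
    ∑ᶠ v ∈ S, nv v * max 0 (Real.log (cnorm v)) ≥
      (1 / (5 * (d : ℝ) - 9)) * (∑ᶠ v, nv v * max 0 (Real.log (cnorm v))) -
        ((5 * (d : ℝ) - 4) / (5 * (d : ℝ) - 9)) *
          (∑ᶠ v, nv v * max 0 (Real.log (av v lam))) := by
  classical
  set i0 : Fin (d - 1) := ⟨0, by omega⟩ with hi0
  -- basic nonvanishing facts
  have hprodc : ∏ i, c i ≠ 0 := by
    rw [hrel]
    exact mul_ne_zero (pow_ne_zero _ (by norm_num)) hlam
  have hci : ∀ i, c i ≠ 0 := by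
    intro i hi
    exact hprodc (Finset.prod_eq_zero (Finset.mem_univ i) hi)
  have havpos : ∀ v i, 0 < av v (c i) := fun v i => (av v).pos (hci i)
  have hlampos : ∀ v, 0 < av v lam := fun v => (av v).pos hlam
  have hle : ∀ v i, av v (c i) ≤ cnorm v := by
    intro v i
    rw [hcnorm v]
    exact Finset.le_sup' (fun i => av v (c i)) (Finset.mem_univ i)
  have hcpos : ∀ v, 0 < cnorm v := fun v => lt_of_lt_of_le (havpos v i0) (hle v i0)
  -- the absolute value of the product relation
  have hmul : ∀ v, ∏ i, av v (c i) = av v lam := by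
    intro v
    rw [← map_prod, hrel, map_mul, map_pow, (av v).map_neg, map_one, one_pow, one_mul]
  -- the finite set outside of which everything is trivial
  have hTfin : ({v | av v lam ≠ 1} ∪ ⋃ i, {v | av v (c i) ≠ 1}).Finite :=
    (hfin lam hlam).union (Set.finite_iUnion fun i => hfin (c i) (hci i))
  set F : Finset V := hTfin.toFinset with hF
  have hout : ∀ v, v ∉ F → av v lam = 1 ∧ ∀ i, av v (c i) = 1 := by
    intro v hv
    rw [hF, Set.Finite.mem_toFinset] at hv
    simp only [Set.mem_union, Set.mem_iUnion, Set.mem_setOf_eq, not_or, not_exists,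
      not_not] at hv
    exact ⟨hv.1, hv.2⟩
  have houtc : ∀ v, v ∉ F → cnorm v = 1 := by
    intro v hv
    rw [hcnorm v]
    apply le_antisymm
    · exact Finset.sup'_le _ _ fun i _ => ((hout v hv).2 i).le
    · exact le_trans (by rw [(hout v hv).2 i0]) (Finset.le_sup' _ (Finset.mem_univ i0))
  -- notation
  set L : V → ℝ := fun v => Real.log (cnorm v) with hL
  set a : V → ℝ := fun v => Real.log (av v (c i0)) with ha
  set m : V → ℝ := fun v => Real.log (av v lam) with hm
  -- supports
  have hsupL : (Function.support fun v => nv v * max 0 (L v)) ⊆ (F : Set V) := by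
    intro v hv
    by_contra hvF
    apply hv
    simp [hL, houtc v hvF]
  have hsupa : (Function.support fun v => nv v * a v) ⊆ (F : Set V) := by
    intro v hv
    by_contra hvF
    apply hv
    simp [ha, (hout v hvF).2 i0]
  have hsupm : (Function.support fun v => nv v * m v) ⊆ (F : Set V) := by
    intro v hv
    by_contra hvF
    apply hv
    simp [hm, (hout v hvF).1]
  have hsupm' : (Function.support fun v => nv v * max 0 (m v)) ⊆ (F : Set V) := by
    intro v hv
    by_contra hvF
    apply hv
    simp [hm, (hout v hvF).1]
  -- finsum conversions
  have htot : ∑ᶠ v, nv v * max 0 (L v) = ∑ v ∈ F, nv v * max 0 (L v) :=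
    finsum_eq_finset_sum_of_support_subset _ hsupL
  have hHlam : ∑ᶠ v, nv v * max 0 (m v) = ∑ v ∈ F, nv v * max 0 (m v) :=
    finsum_eq_finset_sum_of_support_subset _ hsupm'
  have hSsum : ∑ᶠ v ∈ S, nv v * max 0 (L v) =
      ∑ v ∈ F.filter (· ∈ S), nv v * max 0 (L v) := by
    apply finsum_mem_eq_sum_of_inter_support_eq
    ext v
    simp only [Set.mem_inter_iff, Finset.coe_filter, Set.mem_setOf_eq]
    constructor
    · rintro ⟨h1, h2⟩
      exact ⟨⟨hsupL h2, h1⟩, h2⟩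
    · rintro ⟨⟨_, h1⟩, h2⟩
      exact ⟨h1, h2⟩
  -- product formulas over F
  have hpfa : ∑ v ∈ F, nv v * a v = 0 := by
    rw [← finsum_eq_finset_sum_of_support_subset _ hsupa]
    exact hprod _ (hci i0)
  have hpfm : ∑ v ∈ F, nv v * m v = 0 := by
    rw [← finsum_eq_finset_sum_of_support_subset _ hsupm]
    exact hprod _ hlam
  -- h(λ⁻¹) = h(λ)
  have hinv : ∑ v ∈ F, nv v * max 0 (-m v) = ∑ v ∈ F, nv v * max 0 (m v) := by
    have : ∀ v, nv v * max 0 (-m v) = nv v * max 0 (m v) - nv v * m v := by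
      intro v
      rcases le_total (m v) 0 with h | h
      · rw [max_eq_right (by linarith), max_eq_left h]; ring
      · rw [max_eq_left (by linarith), max_eq_right h]; ring
    rw [Finset.sum_congr rfl fun v _ => this v, Finset.sum_sub_distrib, hpfm, sub_zero]
  -- pointwise inequality (P1): -a v ≤ max 0 (-m v) + (d-2) * max 0 (L v)
  have hP1 : ∀ v, -a v ≤ max 0 (-m v) + ((d : ℝ) - 2) * max 0 (L v) := by
    intro v
    have hcard : (Finset.univ.erase i0).card = d - 2 := by
      rw [Finset.card_erase_of_mem (Finset.mem_univ i0), Finset.card_univ, Fintype.card_fin]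
      omega
    have hsplit : av v (c i0) * ∏ i ∈ Finset.univ.erase i0, av v (c i) = av v lam := by
      rw [← hmul v]
      exact Finset.mul_prod_erase _ (fun i => av v (c i)) (Finset.mem_univ i0)
    have hPpos : 0 < ∏ i ∈ Finset.univ.erase i0, av v (c i) :=
      Finset.prod_pos fun i _ => havpos v i
    have hlog : a v + Real.log (∏ i ∈ Finset.univ.erase i0, av v (c i)) = m v := by
      rw [ha, hm, ← Real.log_mul (havpos v i0).ne' hPpos.ne', hsplit]
    have hPle : ∏ i ∈ Finset.univ.erase i0, av v (c i) ≤ cnorm v ^ (d - 2) := by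
      calc ∏ i ∈ Finset.univ.erase i0, av v (c i)
          ≤ ∏ _i ∈ Finset.univ.erase i0, cnorm v :=
            Finset.prod_le_prod (fun i _ => (havpos v i).le) (fun i _ => hle v i)
        _ = cnorm v ^ (d - 2) := by rw [Finset.prod_const, hcard]
    have hlog2 : Real.log (∏ i ∈ Finset.univ.erase i0, av v (c i)) ≤
        ((d : ℝ) - 2) * max 0 (L v) := by
      calc Real.log (∏ i ∈ Finset.univ.erase i0, av v (c i))
          ≤ Real.log (cnorm v ^ (d - 2)) := Real.log_le_log hPpos hPle
        _ = ((d - 2 : ℕ) : ℝ) * L v := by rw [Real.log_pow]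
        _ ≤ ((d : ℝ) - 2) * max 0 (L v) := by
            have h2 : ((d - 2 : ℕ) : ℝ) = (d : ℝ) - 2 := by
              push_cast [Nat.cast_sub (by omega : 2 ≤ d)]; ring
            rw [h2]
            exact mul_le_mul_of_nonneg_left (le_max_right _ _) (by
              have : (3 : ℝ) ≤ (d : ℝ) := by exact_mod_cast hd
              linarith)
    have hmm : -m v ≤ max 0 (-m v) := le_max_right _ _
    linarith
  -- pointwise inequality (P2): max 0 (-L v) ≤ max 0 (-m v)
  have hP2 : ∀ v, max 0 (-L v) ≤ max 0 (-m v) := by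
    intro v
    have hml : m v ≤ ((d : ℝ) - 1) * L v := by
      have h1 : av v lam ≤ cnorm v ^ (d - 1) := by
        rw [← hmul v]
        calc ∏ i, av v (c i) ≤ ∏ _i : Fin (d - 1), cnorm v :=
              Finset.prod_le_prod (fun i _ => (havpos v i).le) (fun i _ => hle v i)
          _ = cnorm v ^ (d - 1) := by rw [Finset.prod_const, Finset.card_univ, Fintype.card_fin]
      calc m v ≤ Real.log (cnorm v ^ (d - 1)) := Real.log_le_log (hlampos v) h1
        _ = ((d - 1 : ℕ) : ℝ) * L v := by rw [Real.log_pow]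
        _ = ((d : ℝ) - 1) * L v := by
            rw [Nat.cast_sub (by omega : 1 ≤ d)]; norm_num
    have hd1 : (2 : ℝ) ≤ (d : ℝ) - 1 := by
      have : (3 : ℝ) ≤ (d : ℝ) := by exact_mod_cast hd
      linarith
    rcases le_total (L v) 0 with h | h
    · rw [max_eq_right (by linarith : (0:ℝ) ≤ -L v)]
      have h2 : ((d : ℝ) - 1) * L v ≤ L v := by nlinarith
      have h3 : -L v ≤ -m v := by linarith
      exact h3.trans (le_max_right _ _)
    · rw [max_eq_left (by linarith : -L v ≤ 0)]
      exact le_max_left _ _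
  -- pointwise inequality (P3): for v ∉ S, max 0 (L v) ≤ 5 * a v + max 0 (-L v)
  have hP3 : ∀ v, v ∉ S → max 0 (L v) ≤ 5 * a v + max 0 (-L v) := by
    intro v hv
    have h5 : L v ≤ 5 * a v := by
      rw [hS] at hv
      simp only [Set.mem_setOf_eq, not_lt] at hv
      exact hv
    rcases le_total (L v) 0 with h | h
    · rw [max_eq_left h]
      have : -L v ≤ max 0 (-L v) := le_max_right _ _
      linarith
    · rw [max_eq_right h]
      have : (0:ℝ) ≤ max 0 (-L v) := le_max_left _ _
      linarith
  -- abbreviations for the finset sums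
  set SigS : ℝ := ∑ v ∈ F.filter (· ∈ S), nv v * max 0 (L v) with hSigS
  set Stot : ℝ := ∑ v ∈ F, nv v * max 0 (L v) with hStot
  set Hlam2 : ℝ := ∑ v ∈ F, nv v * max 0 (m v) with hHlam2
  have hHlam2nonneg : 0 ≤ Hlam2 :=
    Finset.sum_nonneg fun v _ => mul_nonneg (hnv v).le (le_max_left _ _)
  have hSigSnonneg : 0 ≤ SigS :=
    Finset.sum_nonneg fun v _ => mul_nonneg (hnv v).le (le_max_left _ _)
  -- split the total sum
  have hsplitsum : Stot = SigS + ∑ v ∈ F.filter (· ∉ S), nv v * max 0 (L v) := by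
    rw [hStot, hSigS, Finset.sum_filter_add_sum_filter_not]
  -- bound the complement sum
  have hbound1 : ∑ v ∈ F.filter (· ∉ S), nv v * max 0 (L v) ≤
      5 * ∑ v ∈ F.filter (· ∉ S), nv v * a v + ∑ v ∈ F.filter (· ∉ S), nv v * max 0 (-L v) := by
    rw [Finset.mul_sum, ← Finset.sum_add_distrib]
    apply Finset.sum_le_sum
    intro v hv
    have hvS : v ∉ S := (Finset.mem_filter.mp hv).2
    have := hP3 v hvS
    have := (hnv v).le
    nlinarith [hP3 v hvS, (hnv v).le]
  have hcompa : ∑ v ∈ F.filter (· ∉ S), nv v * a v = - ∑ v ∈ F.filter (· ∈ S), nv v * a v := by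
    have := Finset.sum_filter_add_sum_filter_not F (· ∈ S) (fun v => nv v * a v)
    linarith [hpfa, this]
  have hbound2 : - ∑ v ∈ F.filter (· ∈ S), nv v * a v ≤ Hlam2 + ((d : ℝ) - 2) * SigS := by
    rw [← Finset.sum_neg_distrib]
    calc ∑ v ∈ F.filter (· ∈ S), -(nv v * a v)
        ≤ ∑ v ∈ F.filter (· ∈ S), (nv v * max 0 (-m v) + ((d : ℝ) - 2) * (nv v * max 0 (L v))) := by
          apply Finset.sum_le_sum
          intro v _
          have h1 := hP1 v
          have h2 := (hnv v).le
          nlinarith [hP1 v, (hnv v).le]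
      _ = ∑ v ∈ F.filter (· ∈ S), nv v * max 0 (-m v) + ((d : ℝ) - 2) * SigS := by
          rw [Finset.sum_add_distrib, ← Finset.mul_sum]
      _ ≤ Hlam2 + ((d : ℝ) - 2) * SigS := by
          have : ∑ v ∈ F.filter (· ∈ S), nv v * max 0 (-m v) ≤ ∑ v ∈ F, nv v * max 0 (-m v) :=
            Finset.sum_le_sum_of_subset_of_nonneg (Finset.filter_subset _ _)
              (fun v _ _ => mul_nonneg (hnv v).le (le_max_left _ _))
          rw [hinv] at this
          linarith
  have hbound3 : ∑ v ∈ F.filter (· ∉ S), nv v * max 0 (-L v) ≤ Hlam2 := by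
    calc ∑ v ∈ F.filter (· ∉ S), nv v * max 0 (-L v)
        ≤ ∑ v ∈ F.filter (· ∉ S), nv v * max 0 (-m v) :=
          Finset.sum_le_sum fun v _ => mul_le_mul_of_nonneg_left (hP2 v) (hnv v).le
      _ ≤ ∑ v ∈ F, nv v * max 0 (-m v) :=
          Finset.sum_le_sum_of_subset_of_nonneg (Finset.filter_subset _ _)
            (fun v _ _ => mul_nonneg (hnv v).le (le_max_left _ _))
      _ = Hlam2 := hinv
  -- key inequality
  have hkey : Stot ≤ (5 * (d : ℝ) - 9) * SigS + 6 * Hlam2 := by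
    have h1 : ∑ v ∈ F.filter (· ∉ S), nv v * max 0 (L v) ≤
        5 * (Hlam2 + ((d : ℝ) - 2) * SigS) + Hlam2 := by
      have := hbound1
      rw [hcompa] at this
      nlinarith [hbound2, hbound3]
    rw [hsplitsum]
    nlinarith
  -- conclude
  rw [ge_iff_le, hSsum, htot, hHlam]
  have hD : (0 : ℝ) < 5 * (d : ℝ) - 9 := by
    have : (3 : ℝ) ≤ (d : ℝ) := by exact_mod_cast hd
    linarith
  rw [div_mul_eq_mul_div, div_mul_eq_mul_div, one_mul, div_sub_div_same, div_le_iff₀ hD]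
  have h6 : 6 * Hlam2 ≤ (5 * (d : ℝ) - 4) * Hlam2 := by
    have : (3 : ℝ) ≤ (d : ℝ) := by exact_mod_cast hd
    nlinarith
  nlinarith [hkey]
end

section
/- Let f_a(z) = z + a + 1/z, viewed as a rational map over the function field ℚ(a). For every n ≥ 1, the rational function f_a^n(1) ∈ ℚ(a) (the n-th iterate of f_a evaluated at the critical point z = 1), regarded as a rational function of the parameter a, has degree 2^{n−1} in a. The same holds for f_a^n(−1). -/
open Polynomial

-- num/denom degree extraction
lemma num_denom_natDegree {p q : ℚ[X]} (hp : p ≠ 0) (hq : q ≠ 0) (hc : IsCoprime p q) :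
    (RatFunc.num (algebraMap ℚ[X] (RatFunc ℚ) p / algebraMap ℚ[X] (RatFunc ℚ) q)).natDegree
        = p.natDegree ∧
    (RatFunc.denom (algebraMap ℚ[X] (RatFunc ℚ) p / algebraMap ℚ[X] (RatFunc ℚ) q)).natDegree
        = q.natDegree := by
  set x : RatFunc ℚ := algebraMap ℚ[X] (RatFunc ℚ) p / algebraMap ℚ[X] (RatFunc ℚ) q with hx
  have hQ : algebraMap ℚ[X] (RatFunc ℚ) q ≠ 0 := by
    simpa using hq
  have hD : algebraMap ℚ[X] (RatFunc ℚ) x.denom ≠ 0 := by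
    simpa using x.denom_ne_zero
  have hcross : p * x.denom = x.num * q := by
    have h0 : (algebraMap ℚ[X] (RatFunc ℚ)) x.num / (algebraMap ℚ[X] (RatFunc ℚ)) x.denom
        = (algebraMap ℚ[X] (RatFunc ℚ)) p / (algebraMap ℚ[X] (RatFunc ℚ)) q := by
      rw [RatFunc.num_div_denom]
    rw [div_eq_div_iff hD hQ, ← map_mul, ← map_mul] at h0
    exact (RatFunc.algebraMap_injective ℚ h0).symm ▸ (mul_comm p x.denom ▸ rfl)
  have hnd : IsCoprime x.num x.denom := RatFunc.isCoprime_num_denom x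
  have h1 : p ∣ x.num := by
    have : p ∣ x.num * q := ⟨x.denom, hcross.symm⟩
    exact hc.dvd_of_dvd_mul_right this
  have h2 : x.num ∣ p := by
    have : x.num ∣ p * x.denom := ⟨q, hcross⟩
    exact hnd.dvd_of_dvd_mul_right this
  have h3 : q ∣ x.denom := by
    have : q ∣ p * x.denom := ⟨x.num, by linear_combination hcross⟩
    exact hc.symm.dvd_of_dvd_mul_left this
  have h4 : x.denom ∣ q := by
    have : x.denom ∣ x.num * q := ⟨p, by linear_combination -hcross⟩
    exact hnd.symm.dvd_of_dvd_mul_left this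
  constructor
  · exact (natDegree_eq_natDegree (degree_eq_degree_of_associated
      (associated_of_dvd_dvd h2 h1))).symm ▸ rfl
  · exact natDegree_eq_natDegree (degree_eq_degree_of_associated
      (associated_of_dvd_dvd h4 h3))

lemma main_aux (φ : RatFunc ℚ → RatFunc ℚ)
    (hφ : ∀ z : RatFunc ℚ, φ z = z + RatFunc.X + z⁻¹) (c : ℚ) :
    ∀ m : ℕ, ∃ p q : ℚ[X],
      φ^[m] (algebraMap ℚ[X] (RatFunc ℚ) (X + C c)) =
        algebraMap ℚ[X] (RatFunc ℚ) p / algebraMap ℚ[X] (RatFunc ℚ) q ∧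
      IsCoprime p q ∧ p.natDegree = 2 ^ m ∧ q.natDegree = 2 ^ m - 1 ∧
      0 < p.leadingCoeff ∧ 0 < q.leadingCoeff := by
  intro m
  induction m with
  | zero =>
    refine ⟨X + C c, 1, ?_, isCoprime_one_right, ?_, ?_, ?_, ?_⟩
    · simp
    · simpa using natDegree_X_add_C c
    · simp
    · simp [leadingCoeff, natDegree_X_add_C]
    · simp
  | succ m ih =>
    obtain ⟨p, q, hz, hcop, hpdeg, hqdeg, hplc, hqlc⟩ := ih
    have hp0 : p ≠ 0 := fun h => by simp [h] at hplc
    have hq0 : q ≠ 0 := fun h => by simp [h] at hqlc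
    have hd1 : 1 ≤ p.natDegree := by rw [hpdeg]; exact Nat.one_le_two_pow
    have hqdeg' : q.natDegree = p.natDegree - 1 := by rw [hpdeg, hqdeg]
    set r : ℚ[X] := p * p + X * p * q + q * q with hr
    have hkey : r.coeff (2 * p.natDegree)
        = p.leadingCoeff * p.leadingCoeff + p.leadingCoeff * q.leadingCoeff := by
      have c1 : (p * p).coeff (2 * p.natDegree) = p.leadingCoeff * p.leadingCoeff := by
        have := coeff_mul_degree_add_degree p p
        rwa [two_mul]
      have c2 : (X * p * q).coeff (2 * p.natDegree) = p.leadingCoeff * q.leadingCoeff := by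
        have := coeff_mul_degree_add_degree (X * p) q
        rw [natDegree_mul X_ne_zero hp0, natDegree_X, leadingCoeff_mul,
          leadingCoeff_X, one_mul] at this
        rw [show 2 * p.natDegree = 1 + p.natDegree + q.natDegree by omega] at *
        exact this
      simp only [hr, coeff_add, c1, c2]
      have c3 : (q * q).coeff (2 * p.natDegree) = 0 := by
        apply coeff_eq_zero_of_natDegree_lt
        calc (q * q).natDegree ≤ q.natDegree + q.natDegree := natDegree_mul_le
          _ < 2 * p.natDegree := by omega
      rw [c3, add_zero]
    have hpos : (0:ℚ) < p.leadingCoeff * p.leadingCoeff + p.leadingCoeff * q.leadingCoeff := by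
      positivity
    have hle : r.natDegree ≤ 2 * p.natDegree := by
      apply natDegree_add_le_of_degree_le
      apply natDegree_add_le_of_degree_le
      · calc (p*p).natDegree ≤ p.natDegree + p.natDegree := natDegree_mul_le
          _ ≤ 2 * p.natDegree := by omega
      · calc (X*p*q).natDegree ≤ (X*p).natDegree + q.natDegree := natDegree_mul_le
          _ ≤ (X.natDegree + p.natDegree) + q.natDegree :=
              Nat.add_le_add_right natDegree_mul_le _
          _ ≤ 2 * p.natDegree := by rw [natDegree_X]; omega
      · calc (q*q).natDegree ≤ q.natDegree + q.natDegree := natDegree_mul_le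
          _ ≤ 2 * p.natDegree := by omega
    have hge : 2 * p.natDegree ≤ r.natDegree :=
      le_natDegree_of_ne_zero (by rw [hkey]; exact hpos.ne')
    have hdeg : r.natDegree = 2 * p.natDegree := le_antisymm hle hge
    refine ⟨r, p * q, ?_, ?_, ?_, ?_, ?_, ?_⟩
    · -- the field identity
      rw [Function.iterate_succ_apply', hz, hφ]
      have hP : algebraMap ℚ[X] (RatFunc ℚ) p ≠ 0 := by
        simpa using hp0
      have hQ : algebraMap ℚ[X] (RatFunc ℚ) q ≠ 0 := by
        simpa using hq0
      rw [← RatFunc.algebraMap_X (K := ℚ), hr]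
      field_simp
      simp only [map_add, map_mul, map_pow]
      ring
    · -- coprimality
      have h1 : IsCoprime r p := by
        have : IsCoprime (q * q) p := (hcop.symm.mul_left hcop.symm)
        have h2 := this.add_mul_right_left (p + X * q)
        have e : r = q * q + (p + X * q) * p := by rw [hr]; ring
        rw [e]; exact h2
      have h2 : IsCoprime r q := by
        have : IsCoprime (p * p) q := (hcop.mul_left hcop)
        have h3 := this.add_mul_right_left (X * p + q)
        have e : r = p * p + (X * p + q) * q := by rw [hr]; ring
        rw [e]; exact h3
      exact h1.mul_right h2
    · rw [hdeg, hpdeg, pow_succ]; ring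
    · rw [natDegree_mul hp0 hq0, hpdeg, hqdeg, pow_succ]
      have := Nat.one_le_two_pow (n := m)
      omega
    · have : r.leadingCoeff = r.coeff (2 * p.natDegree) := by
        rw [leadingCoeff, hdeg]
      rw [this, hkey]; exact hpos
    · rw [leadingCoeff_mul]; positivity

/-- for `f_a(z) = z + a + 1/z` over `ℚ(a)`, the `n`-th iterate of the critical
points `z = ±1` is, as a rational function of the parameter `a`, of degree `2^{n−1}`
(degree of a rational function = max of the degrees of numerator and denominator). -/
theorem iterate_of_critical_point_degree
    (φ : RatFunc ℚ → RatFunc ℚ)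
    (hφ : ∀ z : RatFunc ℚ, φ z = z + RatFunc.X + z⁻¹) :
    ∀ n : ℕ, 1 ≤ n →
      max ((φ^[n] 1).num.natDegree) ((φ^[n] 1).denom.natDegree) = 2 ^ (n - 1) ∧
        max ((φ^[n] (-1)).num.natDegree) ((φ^[n] (-1)).denom.natDegree) = 2 ^ (n - 1) := by
  intro n hn
  obtain ⟨m, rfl⟩ : ∃ m, n = m + 1 := ⟨n - 1, by omega⟩
  have key : ∀ c : ℚ,
      max ((φ^[m] (algebraMap ℚ[X] (RatFunc ℚ) (X + C c))).num.natDegree)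
        ((φ^[m] (algebraMap ℚ[X] (RatFunc ℚ) (X + C c))).denom.natDegree) = 2 ^ m := by
    intro c
    obtain ⟨p, q, hz, hcop, hpdeg, hqdeg, hplc, hqlc⟩ := main_aux φ hφ c m
    have hp0 : p ≠ 0 := fun h => by simp [h] at hplc
    have hq0 : q ≠ 0 := fun h => by simp [h] at hqlc
    obtain ⟨h1, h2⟩ := num_denom_natDegree hp0 hq0 hcop
    rw [hz, h1, h2, hpdeg, hqdeg]
    have := Nat.one_le_two_pow (n := m)
    omega
  have e1 : φ^[m + 1] (1 : RatFunc ℚ) = φ^[m] (algebraMap ℚ[X] (RatFunc ℚ) (X + C 2)) := by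
    rw [Function.iterate_succ_apply, hφ]
    congr 1
    rw [map_add, RatFunc.algebraMap_X]
    simp
    ring
  have e2 : φ^[m + 1] (-1 : RatFunc ℚ)
      = φ^[m] (algebraMap ℚ[X] (RatFunc ℚ) (X + C (-2))) := by
    rw [Function.iterate_succ_apply, hφ]
    congr 1
    rw [map_add, RatFunc.algebraMap_X]
    simp
    ring
  rw [e1, e2]
  simp only [Nat.add_sub_cancel]
  exact ⟨key 2, key (-2)⟩
end
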